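/- Let f be differentiable with L-Lipschitz gradient, g proper, and let x⁺ = prox_{γg}(x − γv) for γ > 0 and v ∈ ℝⁿ. Then dist(0, ∂F(x⁺)) ≤ ‖x − x⁺‖/γ + ‖∇f(x⁺) − w‖ + ‖w − v‖ for any vector w, where F = f + g and ∂F(x⁺) = ∇f(x⁺) + ∂g(x⁺). In particular, with w = Σ_i ∇f_i(x^{k−τ_i}), dist(0, ∂F(x^{k+1})) ≤ ‖Δ^k‖/γ + L·Σ_{d=k−τ}^{k} ‖Δ^d‖ + ‖w − v‖. -/

import Mathlib

open scoped RealInnerProductSpace BigOperators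

/-- The Fréchet subdifferential of `g` at `x`. -/
def frechetSubdiff {n : ℕ} (g : EuclideanSpace ℝ (Fin n) → ℝ)
    (x : EuclideanSpace ℝ (Fin n)) : Set (EuclideanSpace ℝ (Fin n)) :=
  {u | ∀ ε : ℝ, 0 < ε → ∃ δ : ℝ, 0 < δ ∧ ∀ y, ‖y - x‖ ≤ δ →
      g y - g x - ⟪u, y - x⟫ ≥ -(ε * ‖y - x‖)}

private lemma tele_sum (F : ℤ → ℝ) (a : ℤ) (N : ℕ) :
    ∑ d ∈ Finset.Icc a (a + N), F d = ∑ j ∈ Finset.range (N + 1), F (a + j) := by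
  refine Finset.sum_nbij' (fun d => (d - a).toNat) (fun j => a + j) ?_ ?_ ?_ ?_ ?_
  · intro b hb; simp only [Finset.mem_Icc] at hb; simp only [Finset.mem_range]; omega
  · intro b hb; simp only [Finset.mem_range] at hb; simp only [Finset.mem_Icc]; omega
  · intro b hb; simp only [Finset.mem_Icc] at hb; omega
  · intro b hb; simp only [Finset.mem_range] at hb; omega
  · intro b hb; simp only [Finset.mem_Icc] at hb
    congr 1; omega

theorem stmt_19 (n m : ℕ) (f : Fin m → EuclideanSpace ℝ (Fin n) → ℝ)
    (gf : Fin m → EuclideanSpace ℝ (Fin n) → EuclideanSpace ℝ (Fin n))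
    (hgrad : ∀ i z, HasGradientAt (f i) (gf i z) z)
    (L : Fin m → ℝ) (hL : ∀ i, 0 < L i)
    (hlip : ∀ i, ∀ a b : EuclideanSpace ℝ (Fin n), ‖gf i a - gf i b‖ ≤ L i * ‖a - b‖)
    (g : EuclideanSpace ℝ (Fin n) → ℝ) (γ : ℝ) (hγ : 0 < γ)
    (v : EuclideanSpace ℝ (Fin n)) (x : ℤ → EuclideanSpace ℝ (Fin n)) (k : ℤ)
    (τ : ℕ) (τi : Fin m → ℕ) (hdel : ∀ i, τi i ≤ τ)
    (hprox : ∀ y : EuclideanSpace ℝ (Fin n),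
      (1 / 2) * ‖x k - γ • v - x (k + 1)‖ ^ 2 + γ * g (x (k + 1)) ≤
        (1 / 2) * ‖x k - γ • v - y‖ ^ 2 + γ * g y) :
    (∀ w : EuclideanSpace ℝ (Fin n),
      Metric.infDist 0
          ((fun u => (∑ i, gf i (x (k + 1))) + u) '' frechetSubdiff g (x (k + 1))) ≤
        ‖x k - x (k + 1)‖ / γ + ‖(∑ i, gf i (x (k + 1))) - w‖ + ‖w - v‖) ∧
    Metric.infDist 0
        ((fun u => (∑ i, gf i (x (k + 1))) + u) '' frechetSubdiff g (x (k + 1))) ≤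
      ‖x (k + 1) - x k‖ / γ
      + (∑ i, L i) * (∑ d ∈ Finset.Icc (k - (τ : ℤ)) k, ‖x (d + 1) - x d‖)
      + ‖(∑ i, gf i (x (k - (τi i : ℤ)))) - v‖ := by
  set xp := x (k + 1) with hxp
  set a := x k - γ • v with ha
  set u₀ : EuclideanSpace ℝ (Fin n) := γ⁻¹ • (a - xp) with hu₀
  -- u₀ is in the Fréchet subdifferential of g at xp
  have hmem : u₀ ∈ frechetSubdiff g xp := by
    intro ε hε
    refine ⟨2 * γ * ε, by positivity, fun y hy => ?_⟩
    have h1 := hprox y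
    have hsq : ‖a - y‖ ^ 2 = ‖a - xp‖ ^ 2 - 2 * ⟪a - xp, y - xp⟫ + ‖y - xp‖ ^ 2 := by
      have : a - y = (a - xp) - (y - xp) := by abel
      rw [this, norm_sub_sq_real]
    have hinner : ⟪u₀, y - xp⟫ = γ⁻¹ * ⟪a - xp, y - xp⟫ := by
      rw [hu₀, real_inner_smul_left]
    have hnn : (0:ℝ) ≤ ‖y - xp‖ := norm_nonneg _
    set I : ℝ := ⟪a - xp, y - xp⟫ with hI
    have hγ' : γ ≠ 0 := ne_of_gt hγ
    have h2 : 0 ≤ γ * (g y - g xp) - I + ‖y - xp‖ ^ 2 / 2 := by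
      rw [hsq] at h1; nlinarith [h1]
    rw [ge_iff_le, ← mul_le_mul_iff_right₀ hγ, hinner]
    have hmul : γ * (g y - g xp - γ⁻¹ * I) = γ * (g y - g xp) - I := by
      field_simp
    rw [hmul]
    have hbd : ‖y - xp‖ ^ 2 / 2 ≤ γ * (ε * ‖y - xp‖) := by nlinarith
    have : γ * -(ε * ‖y - xp‖) = -(γ * (ε * ‖y - xp‖)) := by ring
    rw [this]
    linarith
  have hp : (∑ i, gf i xp) + u₀ ∈
      ((fun u => (∑ i, gf i xp) + u) '' frechetSubdiff g xp) := ⟨u₀, hmem, rfl⟩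
  -- the first (general) bound
  have main : ∀ w : EuclideanSpace ℝ (Fin n),
      Metric.infDist 0 ((fun u => (∑ i, gf i xp) + u) '' frechetSubdiff g xp) ≤
        ‖x k - xp‖ / γ + ‖(∑ i, gf i xp) - w‖ + ‖w - v‖ := by
    intro w
    have h1 : Metric.infDist 0 ((fun u => (∑ i, gf i xp) + u) '' frechetSubdiff g xp) ≤
        ‖(∑ i, gf i xp) + u₀‖ := by
      have := Metric.infDist_le_dist_of_mem (x := (0 : EuclideanSpace ℝ (Fin n))) hp
      rwa [dist_zero_left] at this
    have hu₀' : u₀ = γ⁻¹ • (x k - xp) - v := by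
      rw [hu₀, ha]
      rw [sub_right_comm, smul_sub, smul_smul, inv_mul_cancel₀ (ne_of_gt hγ), one_smul]
    have hdecomp : (∑ i, gf i xp) + u₀ =
        γ⁻¹ • (x k - xp) + ((∑ i, gf i xp) - w) + (w - v) := by
      rw [hu₀']; abel
    have h2 : ‖(∑ i, gf i xp) + u₀‖ ≤
        ‖γ⁻¹ • (x k - xp)‖ + ‖(∑ i, gf i xp) - w‖ + ‖w - v‖ := by
      rw [hdecomp]
      exact le_trans (norm_add_le _ _) (by gcongr; exact norm_add_le _ _)
    have h3 : ‖γ⁻¹ • (x k - xp)‖ = ‖x k - xp‖ / γ := by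
      rw [norm_smul, norm_inv, Real.norm_of_nonneg hγ.le, div_eq_inv_mul]
    linarith
  refine ⟨main, ?_⟩
  -- second bound: specialize w
  set w := ∑ i, gf i (x (k - (τi i : ℤ))) with hw
  have h1 := main w
  have hS : ∀ d ∈ Finset.Icc (k - (τ : ℤ)) k, (0:ℝ) ≤ ‖x (d + 1) - x d‖ :=
    fun d _ => norm_nonneg _
  -- bound the Lipschitz-delay term
  have hmid : ‖(∑ i, gf i xp) - w‖ ≤
      (∑ i, L i) * (∑ d ∈ Finset.Icc (k - (τ : ℤ)) k, ‖x (d + 1) - x d‖) := by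
    rw [hw, ← Finset.sum_sub_distrib]
    refine le_trans (norm_sum_le _ _) ?_
    rw [Finset.sum_mul]
    refine Finset.sum_le_sum fun i _ => ?_
    refine le_trans (hlip i _ _) ?_
    have hdi : ‖xp - x (k - (τi i : ℤ))‖ ≤
        ∑ d ∈ Finset.Icc (k - (τi i : ℤ)) k, ‖x (d + 1) - x d‖ := by
      have htel : xp - x (k - (τi i : ℤ)) =
          ∑ j ∈ Finset.range (τi i + 1),
            (x (k - (τi i : ℤ) + j + 1) - x (k - (τi i : ℤ) + j)) := by
        have hcongr : (∑ j ∈ Finset.range (τi i + 1),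
              (x (k - (τi i : ℤ) + j + 1) - x (k - (τi i : ℤ) + j))) =
            ∑ j ∈ Finset.range (τi i + 1),
              ((fun j : ℕ => x (k - (τi i : ℤ) + j)) (j + 1)
                - (fun j : ℕ => x (k - (τi i : ℤ) + j)) j) := by
          refine Finset.sum_congr rfl fun j _ => ?_
          dsimp only
          rw [show k - (τi i : ℤ) + j + 1 = k - (τi i : ℤ) + ((j + 1 : ℕ) : ℤ) by
            push_cast; omega]
        rw [hcongr, Finset.sum_range_sub (fun j : ℕ => x (k - (τi i : ℤ) + j)) (τi i + 1)]
        rw [hxp,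
          show k - (τi i : ℤ) + ((τi i + 1 : ℕ) : ℤ) = k + 1 by push_cast; omega,
          show k - (τi i : ℤ) + ((0 : ℕ) : ℤ) = k - (τi i : ℤ) by push_cast; omega]
      rw [htel]
      refine le_trans (norm_sum_le _ _) ?_
      have heq : ∑ d ∈ Finset.Icc (k - (τi i : ℤ)) k, ‖x (d + 1) - x d‖ =
          ∑ j ∈ Finset.range (τi i + 1),
            ‖x (k - (τi i : ℤ) + j + 1) - x (k - (τi i : ℤ) + j)‖ := by
        have hk : k = k - (τi i : ℤ) + (τi i : ℕ) := by omega
        calc ∑ d ∈ Finset.Icc (k - (τi i : ℤ)) k, ‖x (d + 1) - x d‖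
            = ∑ d ∈ Finset.Icc (k - (τi i : ℤ)) (k - (τi i : ℤ) + (τi i : ℕ)),
                ‖x (d + 1) - x d‖ := by rw [← hk]
          _ = _ := tele_sum (fun d => ‖x (d + 1) - x d‖) _ _
      rw [heq]
    refine le_trans (mul_le_mul_of_nonneg_left hdi (hL i).le) ?_
    refine mul_le_mul_of_nonneg_left ?_ (hL i).le
    refine Finset.sum_le_sum_of_subset_of_nonneg ?_ fun d hd _ => norm_nonneg _
    apply Finset.Icc_subset_Icc_left
    have := hdel i; omega
  have hrev : ‖x k - xp‖ = ‖xp - x k‖ := norm_sub_rev _ _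
  have hdiv : ‖x k - xp‖ / γ = ‖xp - x k‖ / γ := by rw [hrev]
  linarith
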